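/- Monotonicity of hitting probabilities: let (l_n) and (u_n) be fixed integer sequences and for p ∈ [0,1] let S_n be a sum of n i.i.d. Bernoulli(p) variables with stopping time τ = inf{n : S_n ≥ u_n or S_n ≤ l_n}. Then the probability ℙ_p(τ < ∞, S_τ ≥ u_τ) of hitting the upper boundary first is non-decreasing in p. -/

import Mathlib

open MeasureTheory ProbabilityTheory

/-- The event of hitting the upper boundary first: the stopping time
`τ = inf{n : S n ≥ u n or S n ≤ l n}` is finite and `S τ ≥ u τ`. -/
def hitsUpperFirst (l u : ℕ → ℤ) (S : ℕ → ℤ) : Prop :=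
  (∃ n, u n ≤ S n ∨ S n ≤ l n) ∧
    u (sInf {n | u n ≤ S n ∨ S n ≤ l n}) ≤ S (sInf {n | u n ≤ S n ∨ S n ≤ l n})

namespace Stmt11Aux


/-- `n` is the first hitting time and the upper boundary is hit there. -/
def upAt (l u : ℕ → ℤ) (S : ℕ → ℤ) (n : ℕ) : Prop :=
  (∀ m < n, ¬ (u m ≤ S m ∨ S m ≤ l m)) ∧ u n ≤ S n

theorem hitsUpperFirst_iff (l u : ℕ → ℤ) (S : ℕ → ℤ) :
    hitsUpperFirst l u S ↔ ∃ n, upAt l u S n := by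
  constructor
  · rintro ⟨hne, hup⟩
    exact ⟨sInf {n | u n ≤ S n ∨ S n ≤ l n},
      fun m hm => Nat.notMem_of_lt_sInf hm, hup⟩
  · rintro ⟨n, hfirst, hupn⟩
    have hmem : n ∈ {n | u n ≤ S n ∨ S n ≤ l n} := Or.inl hupn
    have hinf : sInf {n | u n ≤ S n ∨ S n ≤ l n} = n := by
      refine le_antisymm (Nat.sInf_le hmem) ?_
      by_contra h
      push_neg at h
      exact hfirst _ h (Nat.sInf_mem ⟨n, hmem⟩)
    exact ⟨⟨n, hmem⟩, by rw [hinf]; exact hupn⟩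

theorem upAt_congr {l u S S' : ℕ → ℤ} {n : ℕ} (h : ∀ m ≤ n, S m = S' m) :
    upAt l u S n ↔ upAt l u S' n := by
  unfold upAt
  constructor
  · rintro ⟨h1, h2⟩
    exact ⟨fun m hm => by rw [← h m hm.le]; exact h1 m hm, by rw [← h n le_rfl]; exact h2⟩
  · rintro ⟨h1, h2⟩
    exact ⟨fun m hm => by rw [h m hm.le]; exact h1 m hm, by rw [h n le_rfl]; exact h2⟩

theorem upAt_mono {l u S S' : ℕ → ℤ} (hSS : ∀ m, S m ≤ S' m) {n : ℕ}
    (h : upAt l u S n) : ∃ n' ≤ n, upAt l u S' n' := by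
  obtain ⟨hfirst, hup⟩ := h
  have hmem : n ∈ {m | u m ≤ S' m ∨ S' m ≤ l m} := Or.inl (hup.trans (hSS n))
  set n' := sInf {m | u m ≤ S' m ∨ S' m ≤ l m} with hn'
  have hn'le : n' ≤ n := Nat.sInf_le hmem
  have hn'mem : n' ∈ {m | u m ≤ S' m ∨ S' m ≤ l m} := Nat.sInf_mem ⟨n, hmem⟩
  refine ⟨n', hn'le, fun m hm => Nat.notMem_of_lt_sInf hm, ?_⟩
  rcases hn'mem with h1 | h1
  · exact h1
  · -- S' n' ≤ l n', so S n' ≤ l n', so n' hits for S, so n' = n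
    have hSn' : S n' ≤ l n' := (hSS n').trans h1
    have : ¬ n' < n := fun hlt => hfirst n' hlt (Or.inr hSn')
    have heq : n' = n := le_antisymm hn'le (not_lt.mp this)
    rw [heq]
    exact hup.trans (hSS n)



/-- Bernoulli(p) measure on ℕ. -/
noncomputable def bern (p : ℝ) : Measure ℕ :=
  ENNReal.ofReal (1 - p) • Measure.dirac 0 + ENNReal.ofReal p • Measure.dirac 1

theorem bern_prob (p : ℝ) (hp : p ∈ Set.Icc (0:ℝ) 1) : IsProbabilityMeasure (bern p) := by
  constructor
  simp only [bern, Measure.add_apply, Measure.smul_apply, smul_eq_mul,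
    measure_univ, mul_one]
  rw [← ENNReal.ofReal_add (by linarith [hp.2]) hp.1]
  norm_num

/-- Monotone coupling of Bernoulli(p) and Bernoulli(p'). -/
noncomputable def nu (p p' : ℝ) : Measure (ℕ × ℕ) :=
  ENNReal.ofReal (1 - p') • Measure.dirac (0, 0)
    + ENNReal.ofReal (p' - p) • Measure.dirac (0, 1)
    + ENNReal.ofReal p • Measure.dirac (1, 1)

theorem nu_prob {p p' : ℝ} (hp : 0 ≤ p) (hpp' : p ≤ p') (hp' : p' ≤ 1) :
    IsProbabilityMeasure (nu p p') := by
  constructor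
  simp only [nu, Measure.add_apply, Measure.smul_apply, smul_eq_mul, measure_univ, mul_one]
  rw [← ENNReal.ofReal_add (by linarith) (by linarith), ← ENNReal.ofReal_add (by linarith) hp]
  norm_num

theorem nu_fst {p p' : ℝ} (hp : 0 ≤ p) (hpp' : p ≤ p') (hp' : p' ≤ 1) :
    Measure.map Prod.fst (nu p p') = bern p := by
  rw [nu, Measure.map_add _ _ measurable_fst, Measure.map_add _ _ measurable_fst,
    Measure.map_smul, Measure.map_smul, Measure.map_smul,
    Measure.map_dirac' measurable_fst, Measure.map_dirac' measurable_fst,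
    Measure.map_dirac' measurable_fst]
  simp only [bern]
  congr 1
  rw [← add_smul, ← ENNReal.ofReal_add (by linarith) (by linarith)]
  norm_num

theorem nu_snd {p p' : ℝ} (hp : 0 ≤ p) (hpp' : p ≤ p') (hp' : p' ≤ 1) :
    Measure.map Prod.snd (nu p p') = bern p' := by
  rw [nu, Measure.map_add _ _ measurable_snd, Measure.map_add _ _ measurable_snd,
    Measure.map_smul, Measure.map_smul, Measure.map_smul,
    Measure.map_dirac' measurable_snd, Measure.map_dirac' measurable_snd,
    Measure.map_dirac' measurable_snd]
  simp only [bern]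
  rw [add_assoc]
  congr 1
  rw [← add_smul, ← ENNReal.ofReal_add (by linarith) hp]
  norm_num

theorem nu_support (p p' : ℝ) : nu p p' {q : ℕ × ℕ | ¬ q.1 ≤ q.2} = 0 := by
  simp only [nu, Measure.add_apply, Measure.smul_apply, smul_eq_mul]
  rw [Measure.dirac_apply, Measure.dirac_apply, Measure.dirac_apply]
  simp [Set.indicator_apply]

/-- Every subset of a countable space with measurable singletons is measurable. -/
theorem measurableSet_all {α : Type*} [MeasurableSpace α] [Countable α]
    [MeasurableSingletonClass α] (s : Set α) : MeasurableSet s :=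
  s.to_countable.measurableSet

/-- The law of a `{0,1}`-valued random variable with `ℙ(X = 1) = p` is `bern p`. -/
theorem map_eq_bern {Ω : Type*} [MeasureSpace Ω] [IsProbabilityMeasure (ℙ : Measure Ω)]
    {p : ℝ} (hp : p ∈ Set.Icc (0:ℝ) 1) (X : Ω → ℕ) (hm : Measurable X)
    (hv : ∀ ω, X ω ≤ 1) (hd : ℙ {ω | X ω = 1} = ENNReal.ofReal p) :
    Measure.map X ℙ = bern p := by
  refine Measure.ext_of_singleton fun a => ?_
  rw [Measure.map_apply hm (measurableSet_all _)]
  have hbern : bern p {a} = ENNReal.ofReal (1 - p) * ({a} : Set ℕ).indicator 1 0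
      + ENNReal.ofReal p * ({a} : Set ℕ).indicator 1 1 := by
    simp [bern, Measure.dirac_apply]
  rcases a with _ | _ | n
  · have hcompl : X ⁻¹' {0} = {ω | X ω = 1}ᶜ := by
      ext ω
      simp only [Set.mem_preimage, Set.mem_singleton_iff, Set.mem_compl_iff, Set.mem_setOf_eq]
      have := hv ω
      omega
    have hms : MeasurableSet {ω | X ω = 1} := hm (measurableSet_all ({1} : Set ℕ))
    rw [hcompl, measure_compl hms (measure_ne_top _ _), hd, hbern]
    simp only [Set.indicator_apply, Set.mem_singleton_iff]
    norm_num
    rw [ENNReal.ofReal_sub 1 hp.1, ENNReal.ofReal_one]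
  · have h1 : X ⁻¹' {1} = {ω | X ω = 1} := rfl
    rw [h1, hd, hbern]
    simp [Set.indicator_apply]
  · 
    have h2 : X ⁻¹' {n+2} = ∅ := by
      ext ω
      simp only [Set.mem_preimage, Set.mem_singleton_iff, Set.mem_empty_iff_false, iff_false]
      have := hv ω
      omega
    rw [h2, hbern]
    simp [Set.indicator_apply]



/-- The law of a finite vector of independent random variables is the product of the laws. -/
theorem map_vec {Ω : Type*} [MeasureSpace Ω] [IsProbabilityMeasure (ℙ : Measure Ω)]
    (X : ℕ → Ω → ℕ) (hm : ∀ i, Measurable (X i))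
    (hi : iIndepFun X ℙ) (N : ℕ) :
    Measure.map (fun ω (i : Fin N) => X i ω) ℙ
      = Measure.pi (fun i : Fin N => Measure.map (X i) ℙ) := by
  classical
  have hmv : Measurable (fun ω (i : Fin N) => X i ω) :=
    measurable_pi_lambda _ fun i => hm i
  haveI : ∀ i : Fin N, IsProbabilityMeasure (Measure.map (X i) ℙ) :=
    fun i => Measure.isProbabilityMeasure_map (hm i).aemeasurable
  refine (Measure.pi_eq fun s hs => ?_).symm
  rw [Measure.map_apply hmv (MeasurableSet.univ_pi hs)]
  set s' : ℕ → Set ℕ := fun i => if h : i < N then s ⟨i, h⟩ else Set.univ with hs'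
  have hpre : (fun ω (i : Fin N) => X i ω) ⁻¹' Set.pi Set.univ s
      = ⋂ i ∈ Finset.range N, X i ⁻¹' s' i := by
    ext ω
    simp only [Set.mem_preimage, Set.mem_pi, Set.mem_univ, true_implies,
      Set.mem_iInter, Finset.mem_range]
    constructor
    · intro h i hi2
      simp only [hs', dif_pos hi2]
      exact h ⟨i, hi2⟩
    · intro h i
      have := h i i.isLt
      simpa only [hs', dif_pos i.isLt] using this
  rw [hpre, hi.measure_inter_preimage_eq_mul (Finset.range N)
    (fun i _ => measurableSet_all _)]
  rw [← Fin.prod_univ_eq_prod_range (fun i => ℙ (X i ⁻¹' s' i)) N]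
  refine Finset.prod_congr rfl fun i _ => ?_
  rw [Measure.map_apply (hm i) (measurableSet_all _)]
  congr 1
  simp only [hs', dif_pos i.isLt]

/-- Coordinatewise mapping of a product measure. -/
theorem pi_map_comp {α β : Type*} [MeasurableSpace α] [MeasurableSpace β]
    (N : ℕ) (μ : Measure α) [IsProbabilityMeasure μ] {g : α → β} (hg : Measurable g) :
    Measure.map (fun f (i : Fin N) => g (f i)) (Measure.pi fun _ : Fin N => μ)
      = Measure.pi (fun _ : Fin N => Measure.map g μ) := by
  haveI : IsProbabilityMeasure (Measure.map g μ) := Measure.isProbabilityMeasure_map hg.aemeasurable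
  refine (Measure.pi_eq fun s hs => ?_).symm
  have hmv : Measurable (fun (f : Fin N → α) (i : Fin N) => g (f i)) :=
    measurable_pi_lambda (fun (f : Fin N → α) (i : Fin N) => g (f i))
      (fun i => hg.comp (measurable_pi_apply i))
  rw [Measure.map_apply hmv (MeasurableSet.univ_pi hs)]
  have hpre : (fun f (i : Fin N) => g (f i)) ⁻¹' Set.pi Set.univ s
      = Set.pi Set.univ (fun i => g ⁻¹' s i) := by
    ext f; simp [Set.mem_pi]
  rw [hpre, Measure.pi_pi]
  exact Finset.prod_congr rfl fun i _ => (Measure.map_apply hg (hs i)).symm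

theorem pi_bad_null {α : Type*} [MeasurableSpace α]
    (N : ℕ) (μ : Measure α) [IsProbabilityMeasure μ]
    {bad : Set α} (hbad : μ bad = 0) :
    Measure.pi (fun _ : Fin N => μ) {f : Fin N → α | ∃ i, f i ∈ bad} = 0 := by
  have h0 : ∀ i : Fin N, (Measure.pi fun _ : Fin N => μ) (Function.eval i ⁻¹' bad) = 0 :=
    fun i => Measure.pi_eval_preimage_null (μ := fun _ : Fin N => μ) (i := i) hbad
  refine measure_mono_null (t := ⋃ i : Fin N, Function.eval i ⁻¹' bad) ?_ (measure_iUnion_null h0)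
  intro f hf
  obtain ⟨i, hi⟩ := hf
  exact Set.mem_iUnion.mpr ⟨i, hi⟩





variable (l u : ℕ → ℤ)

/-- Value of a vector extended by zero. -/
def vget {N : ℕ} (v : Fin N → ℕ) (i : ℕ) : ℕ := if h : i < N then v ⟨i, h⟩ else 0

/-- Partial sums of an extended vector, as integers. -/
def psum {N : ℕ} (v : Fin N → ℕ) (m : ℕ) : ℤ := ((∑ i ∈ Finset.range m, vget v i : ℕ) : ℤ)

/-- The `N`-truncated upper-hit event as a set of vectors. -/
def B (N : ℕ) : Set (Fin N → ℕ) := {v | ∃ n < N, upAt l u (psum v) n}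

theorem B_mono {N : ℕ} {v w : Fin N → ℕ} (hvw : ∀ i, v i ≤ w i) (hv : v ∈ B l u N) :
    w ∈ B l u N := by
  obtain ⟨n, hnN, hup⟩ := hv
  have hle : ∀ m, psum v m ≤ psum w m := by
    intro m
    unfold psum
    have : (∑ i ∈ Finset.range m, vget v i) ≤ ∑ i ∈ Finset.range m, vget w i := by
      refine Finset.sum_le_sum fun i _ => ?_
      unfold vget
      split
      · exact hvw _
      · exact le_rfl
    exact_mod_cast this
  obtain ⟨n', hn'n, hup'⟩ := upAt_mono hle hup
  exact ⟨n', lt_of_le_of_lt hn'n hnN, hup'⟩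

theorem vec_preimage_B {Ω : Type*} (X : ℕ → Ω → ℕ) (N : ℕ) :
    (fun ω (i : Fin N) => X i ω) ⁻¹' B l u N
      = {ω | ∃ n < N, upAt l u (fun m => ((∑ i ∈ Finset.range m, X i ω : ℕ) : ℤ)) n} := by
  ext ω
  simp only [Set.mem_preimage, B, Set.mem_setOf_eq]
  refine exists_congr fun n => and_congr_right fun hnN => ?_
  refine upAt_congr fun m hm => ?_
  unfold psum
  congr 1
  refine Finset.sum_congr rfl fun i hi => ?_
  have hiN : i < N := lt_of_lt_of_le (Finset.mem_range.mp hi) (hm.trans hnN.le)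
  simp [vget, dif_pos hiN]

/-- The key per-level comparison, via the monotone coupling. -/
theorem key {p p' : ℝ} (hp : p ∈ Set.Icc (0:ℝ) 1) (hp' : p' ∈ Set.Icc (0:ℝ) 1)
    (hpp' : p ≤ p') (N : ℕ) :
    Measure.pi (fun _ : Fin N => bern p) (B l u N)
      ≤ Measure.pi (fun _ : Fin N => bern p') (B l u N) := by
  haveI : IsProbabilityMeasure (nu p p') := nu_prob hp.1 hpp' hp'.2
  set π := Measure.pi (fun _ : Fin N => nu p p') with hπ
  have hm1 : Measurable (fun (f : Fin N → ℕ × ℕ) (i : Fin N) => (f i).1) :=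
    measurable_pi_lambda (fun (f : Fin N → ℕ × ℕ) (i : Fin N) => (f i).1)
      (fun i => measurable_fst.comp (measurable_pi_apply i))
  have hm2 : Measurable (fun (f : Fin N → ℕ × ℕ) (i : Fin N) => (f i).2) :=
    measurable_pi_lambda (fun (f : Fin N → ℕ × ℕ) (i : Fin N) => (f i).2)
      (fun i => measurable_snd.comp (measurable_pi_apply i))
  have h1 : Measure.pi (fun _ : Fin N => bern p) (B l u N)
      = π ((fun f (i : Fin N) => (f i).1) ⁻¹' B l u N) := by
    rw [← nu_fst hp.1 hpp' hp'.2, ← pi_map_comp N (nu p p') measurable_fst,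
      Measure.map_apply hm1 (measurableSet_all _)]
  have h2 : Measure.pi (fun _ : Fin N => bern p') (B l u N)
      = π ((fun f (i : Fin N) => (f i).2) ⁻¹' B l u N) := by
    rw [← nu_snd hp.1 hpp' hp'.2, ← pi_map_comp N (nu p p') measurable_snd,
      Measure.map_apply hm2 (measurableSet_all _)]
  rw [h1, h2]
  have hbad : π {f : Fin N → ℕ × ℕ | ∃ i, (f i) ∈ {q : ℕ × ℕ | ¬ q.1 ≤ q.2}} = 0 :=
    pi_bad_null N (nu p p') (nu_support p p')
  calc π ((fun f (i : Fin N) => (f i).1) ⁻¹' B l u N)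
      ≤ π (((fun f (i : Fin N) => (f i).2) ⁻¹' B l u N)
          ∪ {f : Fin N → ℕ × ℕ | ∃ i, (f i) ∈ {q : ℕ × ℕ | ¬ q.1 ≤ q.2}}) := by
        refine measure_mono fun f hf => ?_
        by_cases hgood : ∀ i, (f i).1 ≤ (f i).2
        · exact Or.inl (B_mono l u hgood hf)
        · push_neg at hgood
          obtain ⟨i, hi⟩ := hgood
          exact Or.inr ⟨i, by simpa using hi⟩
    _ ≤ π ((fun f (i : Fin N) => (f i).2) ⁻¹' B l u N)
          + π {f : Fin N → ℕ × ℕ | ∃ i, (f i) ∈ {q : ℕ × ℕ | ¬ q.1 ≤ q.2}} := measure_union_le _ _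
    _ = π ((fun f (i : Fin N) => (f i).2) ⁻¹' B l u N) := by rw [hbad, add_zero]


theorem prob_eq_iSup (l u : ℕ → ℤ) {Ω₀ : Type*} [MeasureSpace Ω₀]
    [IsProbabilityMeasure (ℙ : Measure Ω₀)] {q : ℝ} (hq : q ∈ Set.Icc (0:ℝ) 1)
    (Z : ℕ → Ω₀ → ℕ) (hmZ : ∀ i, Measurable (Z i))
    (hiZ : iIndepFun Z ℙ) (hvZ : ∀ i ω, Z i ω ≤ 1)
    (hdZ : ∀ i, ℙ {ω | Z i ω = 1} = ENNReal.ofReal q) :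
    ℙ {ω | hitsUpperFirst l u (fun n => ((∑ i ∈ Finset.range n, Z i ω : ℕ) : ℤ))}
      = ⨆ N, Measure.pi (fun _ : Fin N => bern q) (B l u N) := by
  have hE : ∀ N : ℕ, (fun ω (i : Fin N) => Z i ω) ⁻¹' B l u N
      = {ω | ∃ n < N, upAt l u (fun m => ((∑ i ∈ Finset.range m, Z i ω : ℕ) : ℤ)) n} :=
    fun N => vec_preimage_B l u Z N
  have hunion : {ω | hitsUpperFirst l u (fun n => ((∑ i ∈ Finset.range n, Z i ω : ℕ) : ℤ))}
      = ⋃ N : ℕ, (fun ω (i : Fin N) => Z i ω) ⁻¹' B l u N := by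
    ext ω
    simp only [Set.mem_setOf_eq, Set.mem_iUnion, hE, hitsUpperFirst_iff]
    constructor
    · rintro ⟨n, hn⟩; exact ⟨n + 1, n, Nat.lt_succ_self n, hn⟩
    · rintro ⟨N, n, _, hn⟩; exact ⟨n, hn⟩
  have hdir : Directed (· ⊆ ·) (fun N : ℕ => (fun ω (i : Fin N) => Z i ω) ⁻¹' B l u N) := by
    have hmono : Monotone (fun N : ℕ => (fun ω (i : Fin N) => Z i ω) ⁻¹' B l u N) := by
      intro N M hNM ω hω
      simp only [hE, Set.mem_setOf_eq] at hω ⊢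
      obtain ⟨n, hnN, hn⟩ := hω
      exact ⟨n, lt_of_lt_of_le hnN hNM, hn⟩
    exact hmono.directed_le
  rw [hunion, Directed.measure_iUnion hdir]
  refine iSup_congr fun N => ?_
  have hmv : Measurable (fun ω (i : Fin N) => Z i ω) :=
    measurable_pi_lambda _ fun i => hmZ i
  rw [← Measure.map_apply hmv (measurableSet_all _), map_vec Z hmZ hiZ N]
  congr 1
  exact congrArg Measure.pi (funext fun i => map_eq_bern hq (Z i) (hmZ i) (hvZ i) (hdZ i))

end Stmt11Aux


open Stmt11Aux in
/-- Monotonicity of hitting probabilities (Gandy 2009, Lemma 3): for fixed integer boundary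
sequences `l, u`, the probability that a Bernoulli random walk with success probability `p`
hits the upper boundary first is non-decreasing in `p`. -/
theorem stmt11
    (l u : ℕ → ℤ)
    (Ω : Type*) [MeasureSpace Ω] [IsProbabilityMeasure (ℙ : Measure Ω)]
    (Ω' : Type*) [MeasureSpace Ω'] [IsProbabilityMeasure (ℙ : Measure Ω')]
    (p p' : ℝ) (hp : p ∈ Set.Icc (0:ℝ) 1) (hp' : p' ∈ Set.Icc (0:ℝ) 1) (hpp' : p ≤ p')
    (X : ℕ → Ω → ℕ) (Y : ℕ → Ω' → ℕ)
    (hmX : ∀ i, Measurable (X i)) (hmY : ∀ i, Measurable (Y i))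
    (hiX : iIndepFun X ℙ)
    (hiY : iIndepFun Y ℙ)
    (hvX : ∀ i ω, X i ω ≤ 1) (hvY : ∀ i ω, Y i ω ≤ 1)
    (hdX : ∀ i, ℙ {ω | X i ω = 1} = ENNReal.ofReal p)
    (hdY : ∀ i, ℙ {ω | Y i ω = 1} = ENNReal.ofReal p') :
    ℙ {ω | hitsUpperFirst l u (fun n => ((∑ i ∈ Finset.range n, X i ω : ℕ) : ℤ))}
      ≤ ℙ {ω | hitsUpperFirst l u (fun n => ((∑ i ∈ Finset.range n, Y i ω : ℕ) : ℤ))} := by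
  rw [Stmt11Aux.prob_eq_iSup l u hp X hmX hiX hvX hdX,
    Stmt11Aux.prob_eq_iSup l u hp' Y hmY hiY hvY hdY]
  exact iSup_mono fun N => key l u hp hp' hpp' N
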